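/- Let C be the extended CMV matrix of α : ℤ → ℂ with |α_n| < 1 for all n, and write C^{−ℓ} = (C*)^ℓ (C is unitary). Then for all ℓ ≥ 1 and all m ∈ ℤ: (C^ℓ)_{m,m+k} = (C^{−ℓ})_{m,m+k} = 0 for every k > 2ℓ; (C^ℓ)_{2m,2m+2ℓ} = ρ_{2m} ρ_{2m+1} ⋯ ρ_{2m+2ℓ−1}; (C^ℓ)_{2m+1,2m+2ℓ+1} = 0; (C^{−ℓ})_{2m,2m+2ℓ} = 0; (C^{−ℓ})_{2m+1,2m+2ℓ+1} = ρ_{2m+1} ρ_{2m+2} ⋯ ρ_{2m+2ℓ}; (C^ℓ)_{2m,2m+2ℓ−1} = ρ_{2m} ρ_{2m+1} ⋯ ρ_{2m+2ℓ−2} · conj(α_{2m+2ℓ−1}); (C^ℓ)_{2m+1,2m+2ℓ} = −α_{2m} ρ_{2m+1} ⋯ ρ_{2m+2ℓ−1}; (C^{−ℓ})_{2m,2m+2ℓ−1} = −conj(α_{2m−1}) ρ_{2m} ρ_{2m+1} ⋯ ρ_{2m+2ℓ−2}; (C^{−ℓ})_{2m+1,2m+2ℓ} = ρ_{2m+1}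 ⋯ ρ_{2m+2ℓ−1} · α_{2m+2ℓ}. -/

import Mathlib

open scoped ComplexConjugate

noncomputable section

/-- The two-sided Hilbert space `ℓ²(ℤ, ℂ)`. -/
abbrev HZ : Type := lp (fun _ : ℤ => ℂ) 2

/-- The standard basis vectors. -/
def deltaZ (k : ℤ) : HZ := lp.single 2 k 1

/-- Matrix entries `A_{kℓ} = ⟨δ_k, A δ_ℓ⟩`. -/
def entryZ (A : HZ →L[ℂ] HZ) (k l : ℤ) : ℂ := inner ℂ (deltaZ k) (A (deltaZ l))

/-- `ρ_n = (1 − |α_n|²)^{1/2}`. -/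
def rho (α : ℤ → ℂ) (n : ℤ) : ℝ := Real.sqrt (1 - ‖α n‖ ^ 2)

/-- `L` acts as the even-indexed CMV factor of the Verblunsky coefficients `α`. -/
def IsCMVL (α : ℤ → ℂ) (L : HZ →L[ℂ] HZ) : Prop :=
  ∀ (u : HZ) (m : ℤ),
    (L u) (2 * m) = conj (α (2 * m)) * u (2 * m) + (rho α (2 * m) : ℂ) * u (2 * m + 1) ∧
    (L u) (2 * m + 1) = (rho α (2 * m) : ℂ) * u (2 * m) - α (2 * m) * u (2 * m + 1)

/-- `M` acts as the odd-indexed CMV factor of the Verblunsky coefficients `α`. -/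
def IsCMVM (α : ℤ → ℂ) (M : HZ →L[ℂ] HZ) : Prop :=
  ∀ (u : HZ) (m : ℤ),
    (M u) (2 * m + 1) = conj (α (2 * m + 1)) * u (2 * m + 1)
        + (rho α (2 * m + 1) : ℂ) * u (2 * m + 2) ∧
    (M u) (2 * m + 2) = (rho α (2 * m + 1) : ℂ) * u (2 * m + 1)
        - α (2 * m + 1) * u (2 * m + 2)

namespace CMVaux

def P (α : ℤ → ℂ) (a : ℤ) (n : ℕ) : ℂ := ∏ j ∈ Finset.range n, (rho α (a + j) : ℂ)
lemma P_zero (α : ℤ → ℂ) (a : ℤ) : P α a 0 = 1 := by simp [P]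
lemma P_one (α : ℤ → ℂ) (a : ℤ) : P α a 1 = (rho α a : ℂ) := by simp [P]
lemma P_a1 (α : ℤ → ℂ) (a : ℤ) (n : ℕ) :
    P α a (n + 1) = P α a n * (rho α (a + n) : ℂ) := by
  simp [P, Finset.prod_range_succ]
lemma P_p1 (α : ℤ → ℂ) (a : ℤ) (n : ℕ) :
    P α a (n + 1) = (rho α a : ℂ) * P α (a + 1) n := by
  rw [P, Finset.prod_range_succ']
  rw [mul_comm]
  congr 1
  · simp
  · unfold P
    apply Finset.prod_congr rfl
    intro j _
    congr 2
    push_cast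
    ring
lemma P_p2 (α : ℤ → ℂ) (a : ℤ) (n : ℕ) :
    P α a (n + 2) = (rho α a : ℂ) * (rho α (a + 1) : ℂ) * P α (a + 2) n := by
  rw [show n + 2 = (n + 1) + 1 from rfl, P_p1, P_p1, show a + 1 + 1 = a + 2 from by ring]
  ring
lemma P_a2 (α : ℤ → ℂ) (a : ℤ) (n : ℕ) :
    P α a (n + 2) = P α a n * (rho α (a + n) : ℂ) * (rho α (a + n + 1) : ℂ) := by
  rw [show n + 2 = (n + 1) + 1 from rfl, P_a1, P_a1]
  push_cast
  rw [show a + ((n : ℤ) + 1) = a + n + 1 from by ring]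
lemma P_two (α : ℤ → ℂ) (a : ℤ) : P α a 2 = (rho α a : ℂ) * (rho α (a + 1) : ℂ) := by
  rw [show (2 : ℕ) = 0 + 2 from rfl, P_p2, P_zero, mul_one]
lemma P_conj (α : ℤ → ℂ) (a : ℤ) (n : ℕ) : conj (P α a n) = P α a n := by
  simp [P, map_prod, Complex.conj_ofReal]
lemma entryZ_eq (A : HZ →L[ℂ] HZ) (k l : ℤ) : entryZ A k l = A (deltaZ l) k := by
  unfold entryZ deltaZ
  rw [lp.inner_single_left]
  simp
def entp (L M : HZ →L[ℂ] HZ) (n : ℕ) (r c : ℤ) : ℂ := entryZ ((L * M) ^ n) r c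
lemma ent_zero (L M : HZ →L[ℂ] HZ) (r c : ℤ) :
    entp L M 0 r c = if r = c then 1 else 0 := by
  unfold entp entryZ deltaZ
  rw [pow_zero, ContinuousLinearMap.one_apply, lp.inner_single_left]
  simp [lp.single_apply, Pi.single_apply, eq_comm]
lemma rec_even {α : ℤ → ℂ} {L M : HZ →L[ℂ] HZ} (hL : IsCMVL α L) (hM : IsCMVM α M)
    (n : ℕ) (m l : ℤ) :
    entp L M (n + 1) (2 * m) l =
      conj (α (2 * m)) * (rho α (2 * m - 1) : ℂ) * entp L M n (2 * m - 1) l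
      - conj (α (2 * m)) * α (2 * m - 1) * entp L M n (2 * m) l
      + (rho α (2 * m) : ℂ) * conj (α (2 * m + 1)) * entp L M n (2 * m + 1) l
      + (rho α (2 * m) : ℂ) * (rho α (2 * m + 1) : ℂ) * entp L M n (2 * m + 2) l := by
  simp only [entp, entryZ_eq]
  rw [pow_succ', ContinuousLinearMap.mul_apply, ContinuousLinearMap.mul_apply]
  set u := ((L * M) ^ n) (deltaZ l) with hu
  have h1 := (hL (M u) m).1
  have h2 := (hM u (m - 1)).2
  rw [show 2 * (m - 1) + 2 = 2 * m from by ring] at h2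
  rw [show 2 * (m - 1) + 1 = 2 * m - 1 from by ring] at h2
  have h3 := (hM u m).1
  rw [h1, h2, h3]
  ring
lemma rec_odd {α : ℤ → ℂ} {L M : HZ →L[ℂ] HZ} (hL : IsCMVL α L) (hM : IsCMVM α M)
    (n : ℕ) (m l : ℤ) :
    entp L M (n + 1) (2 * m + 1) l =
      (rho α (2 * m) : ℂ) * (rho α (2 * m - 1) : ℂ) * entp L M n (2 * m - 1) l
      - (rho α (2 * m) : ℂ) * α (2 * m - 1) * entp L M n (2 * m) l
      - α (2 * m) * conj (α (2 * m + 1)) * entp L M n (2 * m + 1) l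
      - α (2 * m) * (rho α (2 * m + 1) : ℂ) * entp L M n (2 * m + 2) l := by
  simp only [entp, entryZ_eq]
  rw [pow_succ', ContinuousLinearMap.mul_apply, ContinuousLinearMap.mul_apply]
  set u := ((L * M) ^ n) (deltaZ l) with hu
  have h1 := (hL (M u) m).2
  have h2 := (hM u (m - 1)).2
  rw [show 2 * (m - 1) + 2 = 2 * m from by ring] at h2
  rw [show 2 * (m - 1) + 1 = 2 * m - 1 from by ring] at h2
  have h3 := (hM u m).1
  rw [h1, h2, h3]
  ring
lemma entry_adj (A : HZ →L[ℂ] HZ) (n : ℕ) (k l : ℤ) :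
    entryZ ((ContinuousLinearMap.adjoint A) ^ n) k l = conj (entryZ (A ^ n) l k) := by
  rw [← ContinuousLinearMap.star_eq_adjoint, ← star_pow, ContinuousLinearMap.star_eq_adjoint]
  unfold entryZ
  rw [ContinuousLinearMap.adjoint_inner_right, ← inner_conj_symm]

lemma key {α : ℤ → ℂ} {L M : HZ →L[ℂ] HZ} (hL : IsCMVL α L) (hM : IsCMVM α M) :
    ∀ n : ℕ,
      (∀ r c : ℤ, 2 * (n : ℤ) + 2 < c - r → entp L M (n + 1) r c = 0) ∧
      (∀ r c : ℤ, 2 * (n : ℤ) + 2 < r - c → entp L M (n + 1) r c = 0) ∧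
      (∀ r c : ℤ, (∃ s, r = 2 * s) → c - r = 2 * (n : ℤ) + 2 →
        entp L M (n + 1) r c = P α r (2 * n + 2)) ∧
      (∀ r c : ℤ, (∃ s, r = 2 * s + 1) → c - r = 2 * (n : ℤ) + 2 →
        entp L M (n + 1) r c = 0) ∧
      (∀ r c : ℤ, (∃ s, r = 2 * s) → c - r = 2 * (n : ℤ) + 1 →
        entp L M (n + 1) r c = P α r (2 * n + 1) * conj (α c)) ∧
      (∀ r c : ℤ, (∃ s, r = 2 * s + 1) → c - r = 2 * (n : ℤ) + 1 →
        entp L M (n + 1) r c = -α (r - 1) * P α r (2 * n + 1)) ∧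
      (∀ r c : ℤ, (∃ s, r = 2 * s) → r - c = 2 * (n : ℤ) + 2 →
        entp L M (n + 1) r c = 0) ∧
      (∀ r c : ℤ, (∃ s, r = 2 * s + 1) → r - c = 2 * (n : ℤ) + 2 →
        entp L M (n + 1) r c = P α c (2 * n + 2)) ∧
      (∀ r c : ℤ, (∃ s, r = 2 * s + 1) → r - c = 2 * (n : ℤ) + 1 →
        entp L M (n + 1) r c = -α (c - 1) * P α c (2 * n + 1)) ∧
      (∀ r c : ℤ, (∃ s, r = 2 * s) → r - c = 2 * (n : ℤ) + 1 →
        entp L M (n + 1) r c = conj (α r) * P α c (2 * n + 1)) := by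
  intro n
  induction n with
  | zero =>
    refine ⟨?_, ?_, ?_, ?_, ?_, ?_, ?_, ?_, ?_, ?_⟩
    · -- band up
      intro r c h
      obtain ⟨s, rfl | rfl⟩ := Int.even_or_odd' r
      · rw [rec_even hL hM 0 s c]
        simp only [ent_zero]
        rw [if_neg (show ¬(2*s-1 = c) by omega), if_neg (show ¬(2*s = c) by omega),
            if_neg (show ¬(2*s+1 = c) by omega), if_neg (show ¬(2*s+2 = c) by omega)]
        ring
      · rw [rec_odd hL hM 0 s c]
        simp only [ent_zero]
        rw [if_neg (show ¬(2*s-1 = c) by omega), if_neg (show ¬(2*s = c) by omega),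
            if_neg (show ¬(2*s+1 = c) by omega), if_neg (show ¬(2*s+2 = c) by omega)]
        ring
    · -- band low
      intro r c h
      obtain ⟨s, rfl | rfl⟩ := Int.even_or_odd' r
      · rw [rec_even hL hM 0 s c]
        simp only [ent_zero]
        rw [if_neg (show ¬(2*s-1 = c) by omega), if_neg (show ¬(2*s = c) by omega),
            if_neg (show ¬(2*s+1 = c) by omega), if_neg (show ¬(2*s+2 = c) by omega)]
        ring
      · rw [rec_odd hL hM 0 s c]
        simp only [ent_zero]
        rw [if_neg (show ¬(2*s-1 = c) by omega), if_neg (show ¬(2*s = c) by omega),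
            if_neg (show ¬(2*s+1 = c) by omega), if_neg (show ¬(2*s+2 = c) by omega)]
        ring
    · -- A
      rintro r c ⟨s, rfl⟩ hc
      obtain rfl : c = 2*s + 2 := by omega
      rw [rec_even hL hM 0 s]
      simp only [ent_zero]
      rw [if_neg (by omega), if_neg (by omega), if_neg (by omega), if_pos trivial]
      rw [show (2*0+2 : ℕ) = 2 from rfl, P_two]
      ring
    · -- B
      rintro r c ⟨s, rfl⟩ hc
      obtain rfl : c = 2*s + 3 := by omega
      rw [rec_odd hL hM 0 s]
      simp only [ent_zero]
      rw [if_neg (by omega), if_neg (by omega), if_neg (by omega), if_neg (by omega)]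
      ring
    · -- C
      rintro r c ⟨s, rfl⟩ hc
      obtain rfl : c = 2*s + 1 := by omega
      rw [rec_even hL hM 0 s]
      simp only [ent_zero]
      rw [if_neg (by omega), if_neg (by omega), if_pos trivial, if_neg (by omega)]
      rw [show (2*0+1 : ℕ) = 1 from rfl, P_one]
      ring
    · -- D
      rintro r c ⟨s, rfl⟩ hc
      obtain rfl : c = 2*s + 2 := by omega
      rw [rec_odd hL hM 0 s]
      simp only [ent_zero]
      rw [if_neg (by omega), if_neg (by omega), if_neg (by omega), if_pos trivial]
      rw [show (2*0+1 : ℕ) = 1 from rfl, P_one, show (2*s+1-1 : ℤ) = 2*s from by ring]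
      ring
    · -- E
      rintro r c ⟨s, rfl⟩ hc
      obtain rfl : c = 2*s - 2 := by omega
      rw [rec_even hL hM 0 s]
      simp only [ent_zero]
      rw [if_neg (by omega), if_neg (by omega), if_neg (by omega), if_neg (by omega)]
      ring
    · -- F
      rintro r c ⟨s, rfl⟩ hc
      obtain rfl : c = 2*s - 1 := by omega
      rw [rec_odd hL hM 0 s]
      simp only [ent_zero]
      rw [if_pos trivial, if_neg (by omega), if_neg (by omega), if_neg (by omega)]
      rw [show (2*0+2 : ℕ) = 2 from rfl, P_two, show (2*s-1+1 : ℤ) = 2*s from by ring]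
      ring
    · -- G
      rintro r c ⟨s, rfl⟩ hc
      obtain rfl : c = 2*s := by omega
      rw [rec_odd hL hM 0 s]
      simp only [ent_zero]
      rw [if_neg (by omega), if_pos trivial, if_neg (by omega), if_neg (by omega)]
      rw [show (2*0+1 : ℕ) = 1 from rfl, P_one]
      ring
    · -- H
      rintro r c ⟨s, rfl⟩ hc
      obtain rfl : c = 2*s - 1 := by omega
      rw [rec_even hL hM 0 s]
      simp only [ent_zero]
      rw [if_pos trivial, if_neg (by omega), if_neg (by omega), if_neg (by omega)]
      rw [show (2*0+1 : ℕ) = 1 from rfl, P_one]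
      ring
  | succ n IH =>
    obtain ⟨bu, bl, hA, hB, hC, hD, hE, hF, hG, hH⟩ := IH
    refine ⟨?_, ?_, ?_, ?_, ?_, ?_, ?_, ?_, ?_, ?_⟩
    · -- band up
      intro r c h
      obtain ⟨s, rfl | rfl⟩ := Int.even_or_odd' r
      · rw [rec_even hL hM (n+1) s c,
            bu (2*s-1) c (by omega), bu (2*s) c (by omega),
            bu (2*s+1) c (by omega), bu (2*s+2) c (by omega)]
        ring
      · rw [rec_odd hL hM (n+1) s c,
            bu (2*s-1) c (by omega), bu (2*s) c (by omega),
            bu (2*s+1) c (by omega), bu (2*s+2) c (by omega)]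
        ring
    · -- band low
      intro r c h
      obtain ⟨s, rfl | rfl⟩ := Int.even_or_odd' r
      · rw [rec_even hL hM (n+1) s c,
            bl (2*s-1) c (by omega), bl (2*s) c (by omega),
            bl (2*s+1) c (by omega), bl (2*s+2) c (by omega)]
        ring
      · rw [rec_odd hL hM (n+1) s c,
            bl (2*s-1) c (by omega), bl (2*s) c (by omega),
            bl (2*s+1) c (by omega), bl (2*s+2) c (by omega)]
        ring
    · -- A
      rintro r c ⟨s, rfl⟩ hc
      obtain rfl : c = 2*s + 2*(n:ℤ) + 4 := by omega
      rw [rec_even hL hM (n+1) s,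
          bu (2*s-1) _ (by omega), bu (2*s) _ (by omega), bu (2*s+1) _ (by omega),
          hA (2*s+2) _ ⟨s+1, by ring⟩ (by omega)]
      conv_rhs => rw [show 2*(n+1)+2 = (2*n+2)+2 from by ring, P_p2]
      ring
    · -- B
      rintro r c ⟨s, rfl⟩ hc
      obtain rfl : c = 2*s + 2*(n:ℤ) + 5 := by omega
      rw [rec_odd hL hM (n+1) s,
          bu (2*s-1) _ (by omega), bu (2*s) _ (by omega), bu (2*s+1) _ (by omega),
          bu (2*s+2) _ (by omega)]
      ring
    · -- C
      rintro r c ⟨s, rfl⟩ hc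
      obtain rfl : c = 2*s + 2*(n:ℤ) + 3 := by omega
      rw [rec_even hL hM (n+1) s,
          bu (2*s-1) _ (by omega), bu (2*s) _ (by omega),
          hB (2*s+1) _ ⟨s, rfl⟩ (by omega),
          hC (2*s+2) _ ⟨s+1, by ring⟩ (by omega)]
      conv_rhs => rw [show 2*(n+1)+1 = (2*n+1)+2 from by ring, P_p2]
      ring
    · -- D
      rintro r c ⟨s, rfl⟩ hc
      obtain rfl : c = 2*s + 2*(n:ℤ) + 4 := by omega
      rw [rec_odd hL hM (n+1) s,
          bu (2*s-1) _ (by omega), bu (2*s) _ (by omega), bu (2*s+1) _ (by omega),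
          hA (2*s+2) _ ⟨s+1, by ring⟩ (by omega)]
      conv_rhs => rw [show (2*s+1-1 : ℤ) = 2*s from by ring,
          show 2*(n+1)+1 = (2*n+2)+1 from by ring, P_p1,
          show (2*s+1+1 : ℤ) = 2*s+2 from by ring]
      ring
    · -- E
      rintro r c ⟨s, rfl⟩ hc
      obtain rfl : c = 2*s - 2*(n:ℤ) - 4 := by omega
      rw [rec_even hL hM (n+1) s,
          bl (2*s-1) _ (by omega), bl (2*s) _ (by omega), bl (2*s+1) _ (by omega),
          bl (2*s+2) _ (by omega)]
      ring
    · -- F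
      rintro r c ⟨s, rfl⟩ hc
      obtain rfl : c = 2*s - 2*(n:ℤ) - 3 := by omega
      rw [rec_odd hL hM (n+1) s,
          hF (2*s-1) _ ⟨s-1, by ring⟩ (by omega),
          bl (2*s) _ (by omega), bl (2*s+1) _ (by omega), bl (2*s+2) _ (by omega)]
      conv_rhs => rw [show 2*(n+1)+2 = (2*n+2)+2 from by ring, P_a2,
          show (2*s - 2*(n:ℤ) - 3) + ((2*n+2 : ℕ) : ℤ) = 2*s - 1 from by push_cast; ring,
          show (2*s - 1 + 1 : ℤ) = 2*s from by ring]
      ring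
    · -- G
      rintro r c ⟨s, rfl⟩ hc
      obtain rfl : c = 2*s - 2*(n:ℤ) - 2 := by omega
      rw [rec_odd hL hM (n+1) s,
          hG (2*s-1) _ ⟨s-1, by ring⟩ (by omega),
          hE (2*s) _ ⟨s, rfl⟩ (by omega),
          bl (2*s+1) _ (by omega), bl (2*s+2) _ (by omega)]
      conv_rhs => rw [show 2*(n+1)+1 = (2*n+1)+2 from by ring, P_a2,
          show (2*s - 2*(n:ℤ) - 2) + ((2*n+1 : ℕ) : ℤ) = 2*s - 1 from by push_cast; ring,
          show (2*s - 1 + 1 : ℤ) = 2*s from by ring]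
      ring
    · -- H
      rintro r c ⟨s, rfl⟩ hc
      obtain rfl : c = 2*s - 2*(n:ℤ) - 3 := by omega
      rw [rec_even hL hM (n+1) s,
          hF (2*s-1) _ ⟨s-1, by ring⟩ (by omega),
          bl (2*s) _ (by omega), bl (2*s+1) _ (by omega), bl (2*s+2) _ (by omega)]
      conv_rhs => rw [show 2*(n+1)+1 = (2*n+2)+1 from by ring, P_a1,
          show (2*s - 2*(n:ℤ) - 3) + ((2*n+2 : ℕ) : ℤ) = 2*s - 1 from by push_cast; ring]
      ring

end CMVaux

/-- matrix entries of powers of the extended CMV matrix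
`C = LM` and of `C^{−ℓ} = (C*)^ℓ`. -/
theorem statement9 (α : ℤ → ℂ) (hα : ∀ n, ‖α n‖ < 1)
    (L M : HZ →L[ℂ] HZ) (hL : IsCMVL α L) (hM : IsCMVM α M)
    (ℓ : ℕ) (hℓ : 1 ≤ ℓ) (m : ℤ) :
    (∀ k : ℤ, 2 * (ℓ : ℤ) < k →
      entryZ ((L * M) ^ ℓ) m (m + k) = 0 ∧
      entryZ ((ContinuousLinearMap.adjoint (L * M)) ^ ℓ) m (m + k) = 0) ∧
    entryZ ((L * M) ^ ℓ) (2 * m) (2 * m + 2 * ℓ)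
      = ∏ j ∈ Finset.range (2 * ℓ), (rho α (2 * m + j) : ℂ) ∧
    entryZ ((L * M) ^ ℓ) (2 * m + 1) (2 * m + 2 * ℓ + 1) = 0 ∧
    entryZ ((ContinuousLinearMap.adjoint (L * M)) ^ ℓ) (2 * m) (2 * m + 2 * ℓ) = 0 ∧
    entryZ ((ContinuousLinearMap.adjoint (L * M)) ^ ℓ) (2 * m + 1) (2 * m + 2 * ℓ + 1)
      = ∏ j ∈ Finset.range (2 * ℓ), (rho α (2 * m + 1 + j) : ℂ) ∧
    entryZ ((L * M) ^ ℓ) (2 * m) (2 * m + 2 * ℓ - 1)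
      = (∏ j ∈ Finset.range (2 * ℓ - 1), (rho α (2 * m + j) : ℂ)) *
          conj (α (2 * m + 2 * ℓ - 1)) ∧
    entryZ ((L * M) ^ ℓ) (2 * m + 1) (2 * m + 2 * ℓ)
      = -α (2 * m) * ∏ j ∈ Finset.range (2 * ℓ - 1), (rho α (2 * m + 1 + j) : ℂ) ∧
    entryZ ((ContinuousLinearMap.adjoint (L * M)) ^ ℓ) (2 * m) (2 * m + 2 * ℓ - 1)
      = -conj (α (2 * m - 1)) *
          ∏ j ∈ Finset.range (2 * ℓ - 1), (rho α (2 * m + j) : ℂ) ∧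
    entryZ ((ContinuousLinearMap.adjoint (L * M)) ^ ℓ) (2 * m + 1) (2 * m + 2 * ℓ)
      = (∏ j ∈ Finset.range (2 * ℓ - 1), (rho α (2 * m + 1 + j) : ℂ)) *
          α (2 * m + 2 * ℓ) := by
  obtain ⟨n, rfl⟩ : ∃ n, ℓ = n + 1 := ⟨ℓ - 1, by omega⟩
  obtain ⟨bu, bl, hA, hB, hC, hD, hE, hF, hG, hH⟩ := CMVaux.key hL hM n
  refine ⟨?_, ?_, ?_, ?_, ?_, ?_, ?_, ?_, ?_⟩
  · -- bands
    intro k hk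
    constructor
    · exact bu m (m + k) (by omega)
    · have h0 : entryZ ((L * M) ^ (n + 1)) (m + k) m = 0 := bl (m + k) m (by omega)
      rw [CMVaux.entry_adj, h0, map_zero]
  · -- A
    rw [show (2 * (n + 1) : ℕ) = 2 * n + 2 from by ring]
    exact hA _ _ ⟨m, rfl⟩ (by omega)
  · -- B
    exact hB _ _ ⟨m, rfl⟩ (by omega)
  · -- adjoint even-even = 0
    have h0 : entryZ ((L * M) ^ (n + 1)) (2 * m + 2 * ((n + 1 : ℕ) : ℤ)) (2 * m) = 0 :=
      hE _ _ ⟨m + n + 1, by push_cast; ring⟩ (by omega)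
    rw [CMVaux.entry_adj, h0, map_zero]
  · -- adjoint odd-odd = product
    have h : entryZ ((L * M) ^ (n + 1)) (2 * m + 2 * ((n + 1 : ℕ) : ℤ) + 1) (2 * m + 1)
        = CMVaux.P α (2 * m + 1) (2 * n + 2) :=
      hF _ _ ⟨m + n + 1, by push_cast; ring⟩ (by omega)
    rw [CMVaux.entry_adj, h, CMVaux.P_conj,
      show (2 * (n + 1) : ℕ) = 2 * n + 2 from by ring]
    rfl
  · -- C
    have h : entryZ ((L * M) ^ (n + 1)) (2 * m) (2 * m + 2 * ((n + 1 : ℕ) : ℤ) - 1)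
        = CMVaux.P α (2 * m) (2 * n + 1) * conj (α (2 * m + 2 * ((n + 1 : ℕ) : ℤ) - 1)) :=
      hC _ _ ⟨m, rfl⟩ (by omega)
    rw [h, show (2 * (n + 1) - 1 : ℕ) = 2 * n + 1 from by omega]
    rfl
  · -- D
    have h : entryZ ((L * M) ^ (n + 1)) (2 * m + 1) (2 * m + 2 * ((n + 1 : ℕ) : ℤ))
        = -α (2 * m + 1 - 1) * CMVaux.P α (2 * m + 1) (2 * n + 1) :=
      hD _ _ ⟨m, rfl⟩ (by omega)
    rw [show (2 * m + 1 - 1 : ℤ) = 2 * m from by ring] at h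
    rw [h, show (2 * (n + 1) - 1 : ℕ) = 2 * n + 1 from by omega]
    rfl
  · -- adjoint G
    have h : entryZ ((L * M) ^ (n + 1)) (2 * m + 2 * ((n + 1 : ℕ) : ℤ) - 1) (2 * m)
        = -α (2 * m - 1) * CMVaux.P α (2 * m) (2 * n + 1) :=
      hG _ _ ⟨m + n, by push_cast; ring⟩ (by omega)
    rw [CMVaux.entry_adj, h, map_mul, map_neg, CMVaux.P_conj,
      show (2 * (n + 1) - 1 : ℕ) = 2 * n + 1 from by omega]
    rfl
  · -- adjoint H
    have h : entryZ ((L * M) ^ (n + 1)) (2 * m + 2 * ((n + 1 : ℕ) : ℤ)) (2 * m + 1)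
        = conj (α (2 * m + 2 * ((n + 1 : ℕ) : ℤ))) * CMVaux.P α (2 * m + 1) (2 * n + 1) :=
      hH _ _ ⟨m + n + 1, by push_cast; ring⟩ (by omega)
    rw [CMVaux.entry_adj, h, map_mul, Complex.conj_conj, CMVaux.P_conj,
      show (2 * (n + 1) - 1 : ℕ) = 2 * n + 1 from by omega, mul_comm]
    rfl
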